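/- If an aggregation function agg satisfies Neutrality, i.e., agg(A,S) = agg(Core(A), Core(S)) where Core removes zero elements from a multiset, then adding to an EW-QBAF a new edge (β,α) with edge weight 0 leaves the strength of α unchanged under the modular semantics induced by agg (edge-neutrality): formally, for every iteration i of the update procedure, the iterated strength σ^(i)(α) in the extended framework equals that in the original framework, hence the limits (when defined) are equal. -/
import Mathlib


open Set

structure QBAF (A : Type*) [DecidableEq A] where
  att : Finset (A × A)
  sup : Finset (A × A)
  disj : Disjoint att sup
  tau : A → ℝ
  w : A × A → ℝ

namespace QBAF

variable {A : Type*} [DecidableEq A]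

/-- The set of all edges (attacks and supports). -/
def edges (Q : QBAF A) : Finset (A × A) := Q.att ∪ Q.sup

/-- Multiset of edge-weighted attacker strengths of `α`. -/
def attMS (Q : QBAF A) (σ : A → ℝ) (α : A) : Multiset ℝ :=
  (Q.att.filter (fun r => r.2 = α)).val.map (fun r => σ r.1 * Q.w r)

/-- Multiset of edge-weighted supporter strengths of `α`. -/
def supMS (Q : QBAF A) (σ : A → ℝ) (α : A) : Multiset ℝ :=
  (Q.sup.filter (fun r => r.2 = α)).val.map (fun r => σ r.1 * Q.w r)

/-- Iterates of the modular-semantics update procedure: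
`σ⁰ = τ`, `σ^(i+1)(α) = infl (τ α) (agg A^σ_α S^σ_α)`. -/
def iter (agg : Multiset ℝ → Multiset ℝ → ℝ) (infl : ℝ → ℝ → ℝ)
    (Q : QBAF A) : ℕ → A → ℝ
  | 0 => Q.tau
  | i + 1 => fun α =>
      infl (Q.tau α)
        (agg (Q.attMS (iter agg infl Q i) α) (Q.supMS (iter agg infl Q i) α))

/-- Replace the edge weight function. -/
def setW (Q : QBAF A) (w' : A × A → ℝ) : QBAF A := { Q with w := w' }

/-- Replace the base score function. -/
def setTau (Q : QBAF A) (τ' : A → ℝ) : QBAF A := { Q with tau := τ' }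

/-- For acyclic EW-QBAFs the iteration stabilizes after `card A` steps, so this is
the strength obtained by a forward pass in topological order. -/
def strength [Fintype A] (agg : Multiset ℝ → Multiset ℝ → ℝ) (infl : ℝ → ℝ → ℝ)
    (Q : QBAF A) : A → ℝ := iter agg infl Q (Fintype.card A)

end QBAF

/-- `Core` of a multiset of reals: the sub-multiset of nonzero elements. -/
noncomputable def mcore (S : Multiset ℝ) : Multiset ℝ := S.filter (fun x => x ≠ 0)

/-- There is a (nonempty) directed path from `a` to `b` using edges of `R`. -/
def HasPath {A : Type*} (R : Finset (A × A)) (a b : A) : Prop :=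
  Relation.TransGen (fun x y => (x, y) ∈ R) a b

/-- `p` is a directed path from `a` to `b`: a nonempty list of consecutive edges of `R`. -/
def IsPath {A : Type*} (R : Finset (A × A)) (a b : A) (p : List (A × A)) : Prop :=
  p ≠ [] ∧ (∀ e ∈ p, e ∈ R) ∧ List.Chain' (fun e f => e.2 = f.1) p ∧
    p.head?.map Prod.fst = some a ∧ p.getLast?.map Prod.snd = some b

/-- The EW-QBAF is acyclic. -/
def QAcyclic {A : Type*} [DecidableEq A] (Q : QBAF A) : Prop :=
  ∀ α, ¬ HasPath Q.edges α α

/-- A gradual semantics assigning strengths to arguments of any EW-QBAF. -/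
abbrev Sem (A : Type*) [DecidableEq A] := QBAF A → A → ℝ

/-- `S` dominates `T`: either both cores are empty, or there is a sub-multiset of
`Core S` in bijection `f` with `Core T` such that `x ≤ f x` (the bijection encoded
as a multiset of pairs). -/
def MDominates (S T : Multiset ℝ) : Prop :=
  (mcore S = 0 ∧ mcore T = 0) ∨
    ∃ P : Multiset (ℝ × ℝ), P.map Prod.fst = mcore T ∧ P.map Prod.snd ≤ mcore S ∧
      ∀ q ∈ P, q.1 ≤ q.2

/-- Monotonicity of an aggregation function. -/
def AggMonotone (agg : Multiset ℝ → Multiset ℝ → ℝ) : Prop :=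
  (∀ A S, MDominates A S → agg A S ≤ 0) ∧
  (∀ A S, MDominates S A → 0 ≤ agg A S) ∧
  (∀ A A' S, MDominates A A' → agg A S ≤ agg A' S) ∧
  (∀ A S S', MDominates S S' → agg A S' ≤ agg A S)

/-- Monotonicity of an influence function. -/
def InflMonotone (infl : ℝ → ℝ → ℝ) : Prop :=
  (∀ b a, a < 0 → infl b a ≤ b) ∧
  (∀ b a, 0 < a → b ≤ infl b a) ∧
  (∀ a b₁ b₂, b₁ ≤ b₂ → infl b₁ a ≤ infl b₂ a) ∧
  (∀ b a₁ a₂, a₁ ≤ a₂ → infl b a₁ ≤ infl b a₂)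

/-- Edge-monotonicity of a semantics: increasing the weight of a single attack
(support) edge does not increase (decrease) the strength of its target. -/
def EdgeMono {A : Type*} [DecidableEq A] (σ : Sem A) : Prop :=
  ∀ (Q : QBAF A) (r : A × A) (w' : A × A → ℝ),
    r ∈ Q.edges → Q.w r ≤ w' r → (∀ t, t ≠ r → w' t = Q.w t) →
    (r ∈ Q.att → σ (Q.setW w') r.2 ≤ σ Q r.2) ∧
    (r ∈ Q.sup → σ Q r.2 ≤ σ (Q.setW w') r.2)

/-- (Base-score) monotonicity of a semantics: if `(β,α)` is an edge and the unique
path from `β` to `α`, then increasing `τ(β)` changes `σ(α)` sign-correctly. -/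
def BaseMono {A : Type*} [DecidableEq A] (σ : Sem A) : Prop :=
  ∀ (Q : QBAF A) (β α : A) (τ' : A → ℝ),
    β ≠ α → (β, α) ∈ Q.edges → (∃! p, IsPath Q.edges β α p) →
    Q.tau β ≤ τ' β → (∀ γ, γ ≠ β → τ' γ = Q.tau γ) →
    ((β, α) ∈ Q.att → σ (Q.setTau τ') α ≤ σ Q α) ∧
    ((β, α) ∈ Q.sup → σ Q α ≤ σ (Q.setTau τ') α)

/-- Edge-neutrality of a semantics: adding a fresh edge of weight `0` leaves the
strength of its target unchanged. -/
def EdgeNeutralSem {A : Type*} [DecidableEq A] (σ : Sem A) : Prop :=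
  ∀ (Q Q' : QBAF A) (β α : A),
    Q'.tau = Q.tau → Q.att ⊆ Q'.att → Q.sup ⊆ Q'.sup →
    Q'.edges = insert (β, α) Q.edges →
    (∀ r ∈ Q.edges, Q'.w r = Q.w r) → Q'.w (β, α) = 0 →
    σ Q' α = σ Q α

/-- Edge-stability of a semantics: if all incoming edges of `α` have weight `0`,
the strength of `α` is its base score. -/
def EdgeStable {A : Type*} [DecidableEq A] (σ : Sem A) : Prop :=
  ∀ (Q : QBAF A) (α : A), (∀ r ∈ Q.edges, r.2 = α → Q.w r = 0) → σ Q α = Q.tau α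

/-- `s` is attainable for `α` by varying edge weights in `[0,1]`. -/
def Attainable {A : Type*} [DecidableEq A] (σ : Sem A) (Q : QBAF A) (α : A) (s : ℝ) : Prop :=
  ∃ w' : A × A → ℝ, (∀ r, w' r ∈ Set.Icc (0 : ℝ) 1) ∧ σ (Q.setW w') α = s

/-- The gradient-based relation attribution explanation `∇_{r→α}^σ`: the derivative
of the strength of `α` with respect to the weight of edge `r`. -/
noncomputable def grae {A : Type*} [DecidableEq A] (σ : Sem A) (Q : QBAF A)
    (r : A × A) (α : A) : ℝ :=
  deriv (fun δ => σ (Q.setW (Function.update Q.w r δ)) α) (Q.w r)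

/-- Neutrality of an aggregation function: `agg A S = agg (Core A) (Core S)`. -/
def Neutrality (agg : Multiset ℝ → Multiset ℝ → ℝ) : Prop :=
  ∀ A S, agg A S = agg (mcore A) (mcore S)


lemma mcore_cons_zero (S : Multiset ℝ) : mcore ((0:ℝ) ::ₘ S) = mcore S := by
  simp [mcore]

lemma edge_neutrality_key {A : Type*} [DecidableEq A] (β α : A)
    (F F' : Finset (A × A)) (w w' : A × A → ℝ) (σ : A → ℝ) (γ : A)
    (hF : F' = F ∨ F' = insert (β, α) F) (hnew : (β, α) ∉ F)
    (hww : ∀ r ∈ F, w' r = w r) (h0 : w' (β, α) = 0) :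
    mcore ((F'.filter (fun r => r.2 = γ)).val.map (fun r => σ r.1 * w' r)) =
      mcore ((F.filter (fun r => r.2 = γ)).val.map (fun r => σ r.1 * w r)) := by
  have hcong : (F.filter (fun r => r.2 = γ)).val.map (fun r => σ r.1 * w' r) =
      (F.filter (fun r => r.2 = γ)).val.map (fun r => σ r.1 * w r) := by
    apply Multiset.map_congr rfl
    intro r hr
    have : r ∈ F := (Finset.mem_filter.mp hr).1
    rw [hww r this]
  rcases hF with rfl | rfl
  · rw [hcong]
  · by_cases hγ : γ = α
    · subst hγ
      rw [Finset.filter_insert]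
      rw [if_pos rfl]
      have hni : (β, γ) ∉ F.filter (fun r => r.2 = γ) := fun h => hnew (Finset.mem_filter.mp h).1
      rw [Finset.insert_val_of_notMem hni, Multiset.map_cons, h0, mul_zero,
        mcore_cons_zero, hcong]
    · rw [Finset.filter_insert]
      simp only [if_neg (by simpa using fun h => hγ h.symm : ¬ ((β,α) : A × A).2 = γ)]
      rw [hcong]

/-- **Edge-neutrality**: if `agg` satisfies Neutrality then adding a new edge
`(β,α)` of weight `0` leaves every iterate of the strength of `α` unchanged
under the induced modular semantics. -/
theorem edge_neutrality {A : Type*} [DecidableEq A]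
    (agg : Multiset ℝ → Multiset ℝ → ℝ) (infl : ℝ → ℝ → ℝ)
    (hagg : Neutrality agg)
    (Q Q' : QBAF A) (β α : A)
    (htau : Q'.tau = Q.tau)
    (hatt : Q.att ⊆ Q'.att) (hsup : Q.sup ⊆ Q'.sup)
    (hedges : Q'.edges = insert (β, α) Q.edges)
    (hnew : (β, α) ∉ Q.edges)
    (hw : ∀ r ∈ Q.edges, Q'.w r = Q.w r)
    (hw0 : Q'.w (β, α) = 0) :
    ∀ i : ℕ, QBAF.iter agg infl Q' i α = QBAF.iter agg infl Q i α := by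
  have hmem : (β, α) ∈ Q'.edges := by rw [hedges]; exact Finset.mem_insert_self _ _
  have hnewatt : (β, α) ∉ Q.att := fun h => hnew (Finset.mem_union_left _ h)
  have hnewsup : (β, α) ∉ Q.sup := fun h => hnew (Finset.mem_union_right _ h)
  have hsubatt : ∀ e ∈ Q'.att, e = (β, α) ∨ e ∈ Q.att := by
    intro e he
    have : e ∈ Q'.edges := Finset.mem_union_left _ he
    rw [hedges] at this
    rcases Finset.mem_insert.mp this with h | h
    · exact Or.inl h
    · rcases Finset.mem_union.mp h with h | h
      · exact Or.inr h
      · exact absurd (Finset.disjoint_left.mp Q'.disj he (hsup h)) (fun c => c)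
  have hsubsup : ∀ e ∈ Q'.sup, e = (β, α) ∨ e ∈ Q.sup := by
    intro e he
    have : e ∈ Q'.edges := Finset.mem_union_right _ he
    rw [hedges] at this
    rcases Finset.mem_insert.mp this with h | h
    · exact Or.inl h
    · rcases Finset.mem_union.mp h with h | h
      · exact absurd (Finset.disjoint_left.mp Q'.disj (hatt h) he) (fun c => c)
      · exact Or.inr h
  have hcase : (Q'.att = insert (β, α) Q.att ∧ Q'.sup = Q.sup) ∨
      (Q'.att = Q.att ∧ Q'.sup = insert (β, α) Q.sup) := by
    rcases Finset.mem_union.mp hmem with h | h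
    · left
      constructor
      · apply Finset.Subset.antisymm
        · intro e he
          rcases hsubatt e he with rfl | he'
          · exact Finset.mem_insert_self _ _
          · exact Finset.mem_insert_of_mem he'
        · intro e he
          rcases Finset.mem_insert.mp he with rfl | he'
          · exact h
          · exact hatt he'
      · apply Finset.Subset.antisymm
        · intro e he
          rcases hsubsup e he with rfl | he'
          · exact absurd (Finset.disjoint_left.mp Q'.disj h he) (fun c => c)
          · exact he'
        · exact hsup
    · right
      constructor
      · apply Finset.Subset.antisymm
        · intro e he
          rcases hsubatt e he with rfl | he'
          · exact absurd (Finset.disjoint_left.mp Q'.disj he h) (fun c => c)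
          · exact he'
        · exact hatt
      · apply Finset.Subset.antisymm
        · intro e he
          rcases hsubsup e he with rfl | he'
          · exact Finset.mem_insert_self _ _
          · exact Finset.mem_insert_of_mem he'
        · intro e he
          rcases Finset.mem_insert.mp he with rfl | he'
          · exact h
          · exact hsup he'
  have hwa : ∀ r ∈ Q.att, Q'.w r = Q.w r := fun r hr => hw r (Finset.mem_union_left _ hr)
  have hws : ∀ r ∈ Q.sup, Q'.w r = Q.w r := fun r hr => hw r (Finset.mem_union_right _ hr)
  suffices h : ∀ i γ, QBAF.iter agg infl Q' i γ = QBAF.iter agg infl Q i γ from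
    fun i => h i α
  intro i
  induction i with
  | zero => intro γ; simp [QBAF.iter, htau]
  | succ i ih =>
    intro γ
    have hσ : QBAF.iter agg infl Q' i = QBAF.iter agg infl Q i := funext ih
    simp only [QBAF.iter, hσ, htau]
    congr 1
    set σ := QBAF.iter agg infl Q i with hσdef
    rw [hagg, hagg (Q.attMS σ γ)]
    have hattms : mcore (Q'.attMS σ γ) = mcore (Q.attMS σ γ) := by
      apply edge_neutrality_key β α Q.att Q'.att Q.w Q'.w σ γ _ hnewatt hwa hw0
      rcases hcase with ⟨h1, _⟩ | ⟨h1, _⟩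
      · exact Or.inr h1
      · exact Or.inl h1
    have hsupms : mcore (Q'.supMS σ γ) = mcore (Q.supMS σ γ) := by
      apply edge_neutrality_key β α Q.sup Q'.sup Q.w Q'.w σ γ _ hnewsup hws hw0
      rcases hcase with ⟨_, h1⟩ | ⟨_, h1⟩
      · exact Or.inl h1
      · exact Or.inr h1
    rw [hattms, hsupms]
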